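/- arXiv:2002.01826 — 4 statements merged into one kernel-verified Lean document; each statement's English description precedes it below -/
import Mathlib

section
/- Let p > 2 and let Q(x) = ((p+1)/(2·cosh²(((p−1)/2)·x)))^(1/(p−1)). Then Q is positive, twice continuously differentiable on ℝ, and satisfies Q''(x) − Q(x) + Q(x)^p = 0 for all x ∈ ℝ. -/
/-- The ground state of the one-dimensional nonlinear Klein-Gordon equation. -/
noncomputable def Q (p : ℝ) (x : ℝ) : ℝ :=
  ((p + 1) / (2 * Real.cosh ((p - 1) / 2 * x) ^ 2)) ^ (1 / (p - 1))

theorem ground_state_equation (p : ℝ) (hp : 2 < p) :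
    (∀ x : ℝ, 0 < Q p x) ∧ ContDiff ℝ 2 (Q p) ∧
      ∀ x : ℝ, deriv (deriv (Q p)) x - Q p x + Q p x ^ p = 0 := by
  have hp1 : (0:ℝ) < p - 1 := by linarith
  obtain ⟨a, ha⟩ : ∃ a : ℝ, a = (p - 1) / 2 := ⟨_, rfl⟩
  obtain ⟨b, hb⟩ : ∃ b : ℝ, b = 1 / (p - 1) := ⟨_, rfl⟩
  have hbpos : 0 < b := by rw [hb]; positivity
  have hab : 2 * a * b = 1 := by rw [ha, hb]; field_simp
  obtain ⟨C, hC⟩ : ∃ C : ℝ, C = ((p + 1) / 2) ^ b := ⟨_, rfl⟩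
  have hP : (0:ℝ) < (p + 1) / 2 := by linarith
  have hCpos : 0 < C := hC ▸ Real.rpow_pos_of_pos hP b
  have hcosh : ∀ x : ℝ, 0 < Real.cosh (a * x) := fun x => Real.cosh_pos _
  -- rewrite Q in a convenient form
  have hQ : Q p = fun x => C * Real.cosh (a * x) ^ (-(2 * b)) := by
    funext x
    have hc := hcosh x
    show ((p + 1) / (2 * Real.cosh ((p - 1) / 2 * x) ^ 2)) ^ (1 / (p - 1))
        = C * Real.cosh (a * x) ^ (-(2 * b))
    rw [← ha, ← hb]
    rw [show (p + 1) / (2 * Real.cosh (a * x) ^ 2)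
        = ((p + 1) / 2) / (Real.cosh (a * x) ^ 2) by ring]
    rw [Real.div_rpow hP.le (by positivity), ← Real.rpow_natCast (Real.cosh (a * x)) 2,
      ← Real.rpow_mul hc.le, Real.rpow_neg hc.le, ← div_eq_mul_inv, hC]
    norm_num
  -- first derivative
  have hd1 : ∀ x : ℝ, HasDerivAt (Q p)
      (-(C * (Real.sinh (a * x) * Real.cosh (a * x) ^ (-(2 * b) - 1)))) x := by
    intro x
    have hc := hcosh x
    have h1 : HasDerivAt (fun x : ℝ => a * x) a x := by
      simpa using (hasDerivAt_id x).const_mul a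
    have h2 : HasDerivAt (fun x => Real.cosh (a * x)) (Real.sinh (a * x) * a) x :=
      (Real.hasDerivAt_cosh (a * x)).comp x h1
    have h3 : HasDerivAt (fun x => C * Real.cosh (a * x) ^ (-(2 * b)))
        (C * (Real.sinh (a * x) * a * (-(2 * b)) * Real.cosh (a * x) ^ (-(2 * b) - 1))) x :=
      (h2.rpow_const (Or.inl hc.ne')).const_mul C
    rw [hQ]
    convert h3 using 1
    linear_combination (C * Real.sinh (a * x) * Real.cosh (a * x) ^ (-(2 * b) - 1)) * hab
  have hd1' : deriv (Q p)
      = fun x => -(C * (Real.sinh (a * x) * Real.cosh (a * x) ^ (-(2 * b) - 1))) :=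
    funext fun x => (hd1 x).deriv
  -- second derivative
  have hd2 : ∀ x : ℝ, HasDerivAt (deriv (Q p))
      (-(C * (Real.cosh (a * x) * a * Real.cosh (a * x) ^ (-(2 * b) - 1)
        + Real.sinh (a * x) * (Real.sinh (a * x) * a * (-(2 * b) - 1)
            * Real.cosh (a * x) ^ (-(2 * b) - 1 - 1))))) x := by
    intro x
    have hc := hcosh x
    have h1 : HasDerivAt (fun x : ℝ => a * x) a x := by
      simpa using (hasDerivAt_id x).const_mul a
    have h2 : HasDerivAt (fun x => Real.cosh (a * x)) (Real.sinh (a * x) * a) x :=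
      (Real.hasDerivAt_cosh (a * x)).comp x h1
    have h2s : HasDerivAt (fun x => Real.sinh (a * x)) (Real.cosh (a * x) * a) x :=
      (Real.hasDerivAt_sinh (a * x)).comp x h1
    have h3 : HasDerivAt (fun x => Real.cosh (a * x) ^ (-(2 * b) - 1))
        (Real.sinh (a * x) * a * (-(2 * b) - 1) * Real.cosh (a * x) ^ (-(2 * b) - 1 - 1)) x :=
      h2.rpow_const (Or.inl hc.ne')
    rw [hd1']
    exact ((h2s.mul h3).const_mul C).neg
  -- smoothness
  have hsmooth : ContDiff ℝ 2 (Q p) := by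
    rw [hQ]
    apply contDiff_const.mul
    rw [contDiff_iff_contDiffAt]
    intro x
    exact ((Real.contDiff_cosh.comp (contDiff_const.mul contDiff_id)).contDiffAt).rpow_const_of_ne
      (hcosh x).ne'
  refine ⟨fun x => by rw [hQ]; positivity, hsmooth, fun x => ?_⟩
  have hc : 0 < Real.cosh (a * x) := hcosh x
  rw [(hd2 x).deriv]; simp only [hQ]
  obtain ⟨c, hcc⟩ : ∃ c : ℝ, c = Real.cosh (a * x) := ⟨_, rfl⟩
  obtain ⟨s, hss⟩ : ∃ s : ℝ, s = Real.sinh (a * x) := ⟨_, rfl⟩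
  rw [← hcc, ← hss]
  obtain ⟨v, hv⟩ : ∃ v : ℝ, v = c ^ (-(2 * b) - 2) := ⟨_, rfl⟩
  have hcpos : 0 < c := hcc ▸ hc
  have f1 : c ^ (-(2 * b) - 1) = v * c := by
    rw [hv, show -(2 * b) - 1 = (-(2 * b) - 2) + 1 by ring, Real.rpow_add_one hcpos.ne']
  have f2 : c ^ (-(2 * b) - 1 - 1) = v := by
    rw [hv, show -(2 * b) - 1 - 1 = -(2 * b) - 2 by ring]
  have f3 : c ^ (-(2 * b)) = v * c ^ 2 := by
    rw [hv, show -(2 * b) = (-(2 * b) - 2) + 2 by ring, Real.rpow_add hcpos,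
      ← Real.rpow_natCast c 2]
    norm_num
  have f4 : s ^ 2 = c ^ 2 - 1 := by
    have := Real.cosh_sq_sub_sinh_sq (a * x); rw [← hcc, ← hss] at this; linarith
  have f5 : (C * c ^ (-(2 * b))) ^ p = C * ((p + 1) / 2) * v := by
    rw [Real.mul_rpow hCpos.le (by positivity), ← Real.rpow_mul hcpos.le,
      show -(2 * b) * p = -(2 * b) - 2 by rw [hb]; field_simp; ring,
      hC, ← Real.rpow_mul hP.le, show b * p = b + 1 by rw [hb]; field_simp; ring,
      Real.rpow_add_one hP.ne', hv]
  rw [f1, f2, f5, f3]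
  have hpa : p = 2 * a + 1 := by rw [ha]; ring
  linear_combination (C * (2 * b + 1) * a * v) * f4 + (C * v * (c ^ 2 - 1)) * hab
    + (C * v / 2) * hpa
end

section
/- Let p > 2, c_Q = (2p+2)^(1/(p−1)), c₁ = ∫_ℝ (Q'(x))² dx and κ = (c_Q/c₁)·∫_ℝ Q(x)^p·e^(−x) dx. There exist constants C > 0 and z₀ > 0 such that for all z ≥ z₀, |∫_ℝ Q(y)^p·Q(y+z) dy − c₁·κ·e^(−z)| ≤ C·e^(−(3/2)z). -/
open MeasureTheory

/-- The constant `c_Q = (2p+2)^(1/(p-1))`. -/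
noncomputable def cQ (p : ℝ) : ℝ := (2 * p + 2) ^ (1 / (p - 1))

/-- The constant `c₁ = ∫ (Q')²`. -/
noncomputable def c₁ (p : ℝ) : ℝ := ∫ x : ℝ, deriv (Q p) x ^ 2

/-- The interaction constant `κ = (c_Q/c₁) ∫ Q^p e^{-x}`. -/
noncomputable def κ (p : ℝ) : ℝ := cQ p / c₁ p * ∫ x : ℝ, Q p x ^ p * Real.exp (-x)

section Helpers
open Real Set

variable {p : ℝ}

lemma cQ_pos (hp : 2 < p) : 0 < cQ p := Real.rpow_pos_of_pos (by linarith) _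

lemma base_pos (hp : 2 < p) (x : ℝ) :
    0 < (p + 1) / (2 * Real.cosh ((p - 1) / 2 * x) ^ 2) := by
  have := Real.cosh_pos ((p - 1) / 2 * x)
  positivity

lemma Q_pos (hp : 2 < p) (x : ℝ) : 0 < Q p x := Real.rpow_pos_of_pos (base_pos hp x) _

lemma Q_eq (hp : 2 < p) (x : ℝ) :
    Q p x = cQ p * Real.exp (-x) * (1 + Real.exp (-(p - 1) * x)) ^ (-(2 / (p - 1)) : ℝ) := by
  have hp1 : p - 1 ≠ 0 := by norm_num; linarith
  have hy : Real.exp (-(p - 1) * x)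
      = Real.exp (-((p - 1) / 2 * x)) * Real.exp (-((p - 1) / 2 * x)) := by
    rw [← Real.exp_add]; ring_nf
  have hbase : (p + 1) / (2 * Real.cosh ((p - 1) / 2 * x) ^ 2)
      = (2 * p + 2) * Real.exp (-(p - 1) * x) * ((1 + Real.exp (-(p - 1) * x)) ^ 2)⁻¹ := by
    rw [Real.cosh_eq, hy, Real.exp_neg]
    have h1 : Real.exp ((p - 1) / 2 * x) ≠ 0 := Real.exp_ne_zero _
    field_simp
  have hnn : (0:ℝ) ≤ 1 + Real.exp (-(p - 1) * x) := by positivity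
  rw [Q, hbase]
  rw [show ((1 + Real.exp (-(p - 1) * x)) ^ 2)⁻¹
      = (1 + Real.exp (-(p - 1) * x)) ^ ((-2 : ℝ)) by
    rw [Real.rpow_neg hnn, Real.rpow_two]]
  rw [Real.mul_rpow (by positivity) (by positivity), Real.mul_rpow (by positivity) (by positivity)]
  congr 1
  · congr 1
    rw [← Real.exp_mul]
    congr 1
    field_simp
  · rw [← Real.rpow_mul hnn]
    congr 1
    field_simp

example (hp : 2 < p) (x : ℝ) : True := trivial

lemma factor_le_one (hp : 2 < p) (x : ℝ) :
    (1 + Real.exp (-(p - 1) * x)) ^ (-(2 / (p - 1)) : ℝ) ≤ 1 :=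
  Real.rpow_le_one_of_one_le_of_nonpos
    (by linarith [Real.exp_pos (-(p - 1) * x)])
    (by rw [neg_nonpos]; apply div_nonneg (by norm_num); linarith)

lemma Q_le (hp : 2 < p) (x : ℝ) : Q p x ≤ cQ p * Real.exp (-x) := by
  rw [Q_eq hp x]
  have h := factor_le_one hp x
  have h0 : (0:ℝ) < cQ p * Real.exp (-x) := by
    have := cQ_pos hp; positivity
  calc cQ p * Real.exp (-x) * (1 + Real.exp (-(p - 1) * x)) ^ (-(2 / (p - 1)) : ℝ)
      ≤ cQ p * Real.exp (-x) * 1 := by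
        apply mul_le_mul_of_nonneg_left h h0.le
    _ = cQ p * Real.exp (-x) := mul_one _

lemma Q_neg (hp : 2 < p) (x : ℝ) : Q p (-x) = Q p x := by
  unfold Q
  rw [mul_neg, Real.cosh_neg]

lemma Q_le_abs (hp : 2 < p) (x : ℝ) : Q p x ≤ cQ p * Real.exp (-|x|) := by
  rcases le_or_gt 0 x with h | h
  · rw [abs_of_nonneg h]; exact Q_le hp x
  · rw [abs_of_neg h, ← Q_neg hp x]
    have := Q_le hp (-x)
    simpa using this

lemma Q_rpow_le (hp : 2 < p) (x : ℝ) :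
    Q p x ^ p ≤ cQ p ^ p * Real.exp (-(p * |x|)) := by
  have h1 : Q p x ^ p ≤ (cQ p * Real.exp (-|x|)) ^ p :=
    Real.rpow_le_rpow (Q_pos hp x).le (Q_le_abs hp x) (by linarith)
  refine h1.trans_eq ?_
  rw [Real.mul_rpow (cQ_pos hp).le (Real.exp_pos _).le, ← Real.exp_mul]
  ring_nf

lemma one_sub_rpow (hp : 2 < p) {t : ℝ} (ht0 : 0 ≤ t) (ht1 : t ≤ 1) :
    1 - (1 + t) ^ (-(2 / (p - 1)) : ℝ) ≤ 3 * t := by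
  have hb : (1:ℝ) ≤ 1 + t := by linarith
  have h1 : (1 + t) ^ ((-2 : ℝ)) ≤ (1 + t) ^ (-(2 / (p - 1)) : ℝ) := by
    apply Real.rpow_le_rpow_of_exponent_le hb
    have : 2 / (p - 1) ≤ 2 := by
      rw [div_le_iff₀ (by linarith)]; linarith
    linarith
  have h2 : (1 - 3 * t) ≤ (1 + t) ^ ((-2 : ℝ)) := by
    rw [Real.rpow_neg (by linarith), Real.rpow_two]
    have hb2 : (0:ℝ) < (1 + t) ^ 2 := by positivity
    rw [inv_eq_one_div, le_div_iff₀ hb2]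
    nlinarith [sq_nonneg t, mul_nonneg (mul_nonneg ht0 ht0) ht0]
  linarith

lemma E_bound_pos (hp : 2 < p) {x : ℝ} (hx : 0 ≤ x) :
    |Q p x - cQ p * Real.exp (-x)| ≤ 3 * cQ p * Real.exp (-(p * x)) := by
  have hq := Q_le hp x
  rw [abs_of_nonpos (by linarith), Q_eq hp x]
  set t := Real.exp (-(p - 1) * x) with ht
  have ht0 : 0 ≤ t := (Real.exp_pos _).le
  have ht1 : t ≤ 1 := by
    rw [ht, Real.exp_le_one_iff]
    have : 0 ≤ (p - 1) * x := mul_nonneg (by linarith) hx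
    linarith
  have h3 := one_sub_rpow hp ht0 ht1
  have hA : 0 < cQ p * Real.exp (-x) := by have := cQ_pos hp; positivity
  calc -(cQ p * Real.exp (-x) * (1 + t) ^ (-(2 / (p - 1)) : ℝ) - cQ p * Real.exp (-x))
      = cQ p * Real.exp (-x) * (1 - (1 + t) ^ (-(2 / (p - 1)) : ℝ)) := by ring
    _ ≤ cQ p * Real.exp (-x) * (3 * t) := mul_le_mul_of_nonneg_left h3 hA.le
    _ = 3 * cQ p * (Real.exp (-x) * Real.exp (-(p - 1) * x)) := by rw [ht]; ring
    _ = 3 * cQ p * Real.exp (-(p * x)) := by rw [← Real.exp_add]; ring_nf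


lemma Q_cont (hp : 2 < p) : Continuous (Q p) := by
  apply Continuous.rpow_const
  · apply Continuous.div continuous_const
    · continuity
    · intro x
      have := Real.cosh_pos ((p - 1) / 2 * x)
      positivity
  · intro x
    exact Or.inl (ne_of_gt (base_pos hp x))

lemma Qp_cont (hp : 2 < p) : Continuous (fun x => Q p x ^ p) :=
  (Q_cont hp).rpow_const fun x => Or.inl (ne_of_gt (Q_pos hp x))

lemma Q_hasDeriv (hp : 2 < p) (x : ℝ) :
    HasDerivAt (Q p) (-(Q p x * Real.tanh ((p - 1) / 2 * x))) x := by
  have hcosh : 0 < Real.cosh ((p - 1) / 2 * x) := Real.cosh_pos _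
  have h1 : HasDerivAt (fun y : ℝ => (p - 1) / 2 * y) ((p - 1) / 2) x := by
    simpa using (hasDerivAt_id x).const_mul ((p - 1) / 2)
  have h2 : HasDerivAt (fun y : ℝ => Real.cosh ((p - 1) / 2 * y))
      (Real.sinh ((p - 1) / 2 * x) * ((p - 1) / 2)) x := h1.cosh
  have h3 := (h2.pow 2).const_mul (2 : ℝ)
  have hne : 2 * Real.cosh ((p - 1) / 2 * x) ^ 2 ≠ 0 := by positivity
  have h4 := (hasDerivAt_const x (p + 1)).div h3 hne
  have h5 := h4.rpow_const (p := 1 / (p - 1)) (Or.inl (ne_of_gt (base_pos hp x)))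
  convert h5 using 1
  · rfl
  have hp1 : p - 1 ≠ 0 := by norm_num; linarith
  have hbpos := base_pos hp x
  simp only [Pi.div_apply, Pi.pow_apply]
  rw [Real.rpow_sub hbpos, Real.rpow_one, Real.tanh_eq_sinh_div_cosh]
  simp only [Q]
  field_simp
  ring

lemma deriv_Q_eq (hp : 2 < p) :
    deriv (Q p) = fun x => -(Q p x * Real.tanh ((p - 1) / 2 * x)) :=
  funext fun x => (Q_hasDeriv hp x).deriv

lemma integrableOn_exp_mul_Iic' {c : ℝ} (hc : 0 < c) (s : ℝ) :
    IntegrableOn (fun y => Real.exp (c * y)) (Iic s) := by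
  have h : IntegrableOn (fun x => Real.exp (-c * x)) (Ioi (-(s + 1))) :=
    exp_neg_integrableOn_Ioi _ hc
  have hmp : MeasurePreserving (fun x : ℝ => -x) volume volume :=
    Measure.measurePreserving_neg _
  have hemb : MeasurableEmbedding (fun x : ℝ => -x) :=
    (Homeomorph.neg ℝ).isClosedEmbedding.measurableEmbedding
  have h2 := (hmp.integrableOn_comp_preimage hemb
    (f := fun x => Real.exp (-c * x)) (s := Ioi (-(s + 1)))).mpr h
  have hpre : (fun x : ℝ => -x) ⁻¹' Ioi (-(s + 1)) = Iio (s + 1) := by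
    ext y; simp [neg_lt]
  rw [hpre] at h2
  have h3 : IntegrableOn (fun y => Real.exp (c * y)) (Iio (s + 1)) := by
    apply h2.congr_fun _ measurableSet_Iio
    intro y _
    show Real.exp (-c * -y) = Real.exp (c * y)
    congr 1; ring
  exact h3.mono_set (Iic_subset_Iio.mpr (by linarith))

lemma integrable_exp_comb {a b : ℝ} (h1 : 0 < a + b) (h2 : 0 < a - b) :
    Integrable (fun y : ℝ => Real.exp (-(a * |y|) + b * y)) := by
  rw [← integrableOn_univ, ← Iic_union_Ioi (a := (0:ℝ))]
  apply IntegrableOn.union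
  · apply ((integrableOn_exp_mul_Iic' h1 0).congr_fun _ measurableSet_Iic)
    intro y hy
    rw [mem_Iic] at hy
    show Real.exp ((a + b) * y) = Real.exp (-(a * |y|) + b * y)
    rw [abs_of_nonpos hy]; congr 1; ring
  · have h : IntegrableOn (fun x => Real.exp (-(a - b) * x)) (Ioi 0) :=
      exp_neg_integrableOn_Ioi _ h2
    apply h.congr_fun _ measurableSet_Ioi
    intro y hy
    rw [mem_Ioi] at hy
    show Real.exp (-(a - b) * y) = Real.exp (-(a * |y|) + b * y)
    rw [abs_of_nonneg hy.le]; congr 1; ring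

lemma tanh_cont : Continuous Real.tanh := by
  have h : Real.tanh = fun x => Real.sinh x / Real.cosh x := funext Real.tanh_eq_sinh_div_cosh
  rw [h]
  exact Real.continuous_sinh.div Real.continuous_cosh fun x => (Real.cosh_pos x).ne'

lemma abs_tanh_le_one (u : ℝ) : |Real.tanh u| ≤ 1 := by
  rw [Real.tanh_eq_sinh_div_cosh, abs_div, abs_of_pos (Real.cosh_pos u),
    div_le_one (Real.cosh_pos u), abs_le]
  constructor
  · linarith [Real.sinh_add_cosh u, (Real.exp_pos u).le]
  · linarith [Real.cosh_sub_sinh u, (Real.exp_pos (-u)).le]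

lemma derivQ_sq_eq (hp : 2 < p) :
    (fun x => deriv (Q p) x ^ 2) = fun x => (Q p x * Real.tanh ((p - 1) / 2 * x)) ^ 2 := by
  rw [deriv_Q_eq hp]
  funext x
  ring

lemma c1_integrable (hp : 2 < p) : Integrable (fun x => deriv (Q p) x ^ 2) := by
  rw [derivQ_sq_eq hp]
  apply Integrable.mono' (g := fun x : ℝ => cQ p ^ 2 * Real.exp (-(2 * |x|) + 0 * x))
  · exact ((integrable_exp_comb (by norm_num) (by norm_num))).const_mul _
  · apply Continuous.aestronglyMeasurable
    apply Continuous.pow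
    exact (Q_cont hp).mul (tanh_cont.comp (by continuity))
  · refine Filter.Eventually.of_forall fun x => ?_
    rw [Real.norm_eq_abs, abs_of_nonneg (sq_nonneg _)]
    have h1 : |Real.tanh ((p - 1) / 2 * x)| ≤ 1 := abs_tanh_le_one _
    have h2 : Q p x ≤ cQ p * Real.exp (-|x|) := Q_le_abs hp x
    have h3 : 0 ≤ Q p x := (Q_pos hp x).le
    have h4 : (Q p x * Real.tanh ((p - 1) / 2 * x)) ^ 2
        = Q p x ^ 2 * Real.tanh ((p - 1) / 2 * x) ^ 2 := by ring
    rw [h4]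
    have h5 : Real.tanh ((p - 1) / 2 * x) ^ 2 ≤ 1 := by
      calc Real.tanh ((p - 1) / 2 * x) ^ 2 = |Real.tanh ((p - 1) / 2 * x)| ^ 2 :=
            (sq_abs _).symm
        _ ≤ 1 ^ 2 := pow_le_pow_left₀ (abs_nonneg _) h1 2
        _ = 1 := one_pow 2
    calc Q p x ^ 2 * Real.tanh ((p - 1) / 2 * x) ^ 2 ≤ Q p x ^ 2 * 1 :=
          mul_le_mul_of_nonneg_left h5 (sq_nonneg _)
      _ = Q p x ^ 2 := mul_one _
      _ ≤ (cQ p * Real.exp (-|x|)) ^ 2 := by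
          apply sq_le_sq' (by nlinarith [cQ_pos hp, (Real.exp_pos (-|x|)).le]) h2
      _ = cQ p ^ 2 * Real.exp (-(2 * |x|) + 0 * x) := by
          rw [mul_pow, ← Real.exp_nat_mul]
          congr 1
          push_cast
          ring

lemma c1_pos (hp : 2 < p) : 0 < ∫ x : ℝ, deriv (Q p) x ^ 2 := by
  rw [integral_pos_iff_support_of_nonneg (fun x => sq_nonneg _) (c1_integrable hp)]
  have hsub : Ioi (0:ℝ) ⊆ Function.support fun x => deriv (Q p) x ^ 2 := by
    intro x hx
    rw [mem_Ioi] at hx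
    rw [Function.mem_support, deriv_Q_eq hp]
    have ht : 0 < Real.tanh ((p - 1) / 2 * x) := by
      rw [Real.tanh_eq_sinh_div_cosh]
      apply div_pos (Real.sinh_pos_iff.mpr ?_) (Real.cosh_pos _)
      have : 0 < p - 1 := by linarith
      positivity
    have hq := Q_pos hp x
    have hne : Q p x * Real.tanh ((p - 1) / 2 * x) ≠ 0 := (mul_pos hq ht).ne'
    exact pow_ne_zero 2 (neg_ne_zero.mpr hne)
  calc (0 : ENNReal) < volume (Ioi (0:ℝ)) := by rw [Real.volume_Ioi]; norm_num
    _ ≤ _ := measure_mono hsub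

lemma integral_exp_neg_mul_Ioi {c : ℝ} (hc : 0 < c) (t : ℝ) :
    ∫ x in Ioi t, Real.exp (-(c * x)) = Real.exp (-(c * t)) / c := by
  have hd : ∀ x ∈ Ici t, HasDerivAt (fun x => -Real.exp (-(c * x)) / c)
      (Real.exp (-(c * x))) x := by
    intro x _
    have h1 : HasDerivAt (fun x : ℝ => -(c * x)) (-c) x := by
      have := ((hasDerivAt_id' x).const_mul c).neg
      exact this.congr_deriv (by ring)
    have h3 := (h1.exp.neg).div_const c
    exact h3.congr_deriv (by rw [div_eq_iff hc.ne']; ring)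
  have hi : IntegrableOn (fun x => Real.exp (-(c * x))) (Ioi t) := by
    have h := exp_neg_integrableOn_Ioi t hc
    simpa [neg_mul] using h
  have hcomp : Filter.Tendsto (fun x : ℝ => -(c * x)) Filter.atTop Filter.atBot := by
    have h1 : Filter.Tendsto (fun x : ℝ => c * x) Filter.atTop Filter.atTop :=
      Filter.Tendsto.const_mul_atTop hc Filter.tendsto_id
    exact Filter.tendsto_neg_atTop_atBot.comp h1
  have ht : Filter.Tendsto (fun x => -Real.exp (-(c * x)) / c) Filter.atTop (nhds 0) := by
    have := ((Real.tendsto_exp_atBot.comp hcomp).neg).div_const c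
    simpa using this
  rw [integral_Ioi_of_hasDerivAt_of_tendsto' hd hi ht]
  field_simp
  ring

lemma integral_exp_mul_Iic' {c : ℝ} (hc : 0 < c) (s : ℝ) :
    ∫ y in Iic s, Real.exp (c * y) = Real.exp (c * s) / c := by
  have h := integral_comp_neg_Iic s (fun x => Real.exp (-(c * x)))
  have heq : (fun x : ℝ => Real.exp (-(c * -x))) = fun x : ℝ => Real.exp (c * x) := by
    funext x; congr 1; ring
  rw [heq] at h
  rw [h, integral_exp_neg_mul_Ioi hc]
  congr 2
  ring

lemma Q_le_cQ (hp : 2 < p) (x : ℝ) : Q p x ≤ cQ p := by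
  refine (Q_le_abs hp x).trans ?_
  have h1 : Real.exp (-|x|) ≤ 1 := Real.exp_le_one_iff.mpr (by simp [abs_nonneg])
  nlinarith [cQ_pos hp]

lemma Qp_pos (hp : 2 < p) (x : ℝ) : 0 < Q p x ^ p := Real.rpow_pos_of_pos (Q_pos hp x) _

lemma int_QpQ (hp : 2 < p) (z : ℝ) : Integrable (fun y => Q p y ^ p * Q p (y + z)) := by
  apply Integrable.mono'
    (g := fun y : ℝ => (cQ p ^ p * cQ p) * Real.exp (-(p * |y|) + 0 * y))
  · exact (integrable_exp_comb (by linarith) (by linarith)).const_mul _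
  · exact ((Qp_cont hp).mul ((Q_cont hp).comp (by continuity))).aestronglyMeasurable
  · refine Filter.Eventually.of_forall fun y => ?_
    rw [Real.norm_eq_abs,
      abs_of_nonneg (mul_nonneg (Qp_pos hp y).le (Q_pos hp (y + z)).le)]
    calc Q p y ^ p * Q p (y + z)
        ≤ (cQ p ^ p * Real.exp (-(p * |y|))) * cQ p := by
          apply mul_le_mul (Q_rpow_le hp y) (Q_le_cQ hp (y + z)) (Q_pos hp (y + z)).le
          exact mul_nonneg (Real.rpow_pos_of_pos (cQ_pos hp) p).le (Real.exp_pos _).le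
      _ = (cQ p ^ p * cQ p) * Real.exp (-(p * |y|) + 0 * y) := by
          rw [zero_mul, add_zero]; ring

lemma int_Qp_exp (hp : 2 < p) : Integrable (fun y => Q p y ^ p * Real.exp (-y)) := by
  apply Integrable.mono'
    (g := fun y : ℝ => cQ p ^ p * Real.exp (-(p * |y|) + (-1) * y))
  · exact (integrable_exp_comb (by linarith) (by linarith)).const_mul _
  · exact ((Qp_cont hp).mul (by continuity)).aestronglyMeasurable
  · refine Filter.Eventually.of_forall fun y => ?_
    rw [Real.norm_eq_abs,
      abs_of_nonneg (mul_nonneg (Qp_pos hp y).le (Real.exp_pos _).le)]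
    calc Q p y ^ p * Real.exp (-y)
        ≤ (cQ p ^ p * Real.exp (-(p * |y|))) * Real.exp (-y) :=
          mul_le_mul_of_nonneg_right (Q_rpow_le hp y) (Real.exp_pos _).le
      _ = cQ p ^ p * Real.exp (-(p * |y|) + (-1) * y) := by
          rw [mul_assoc, ← Real.exp_add]
          congr 2
          ring

end Helpers

section Main
open Real Set
set_option maxHeartbeats 2000000

theorem ground_state_interaction_asymptotics (p : ℝ) (hp : 2 < p) :
    ∃ C > 0, ∃ z₀ > 0, ∀ z : ℝ, z₀ ≤ z →
      |(∫ y : ℝ, Q p y ^ p * Q p (y + z)) - c₁ p * κ p * Real.exp (-z)|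
        ≤ C * Real.exp (-(3 / 2) * z) := by
  have hcQ : 0 < cQ p := cQ_pos hp
  have hcQp : 0 < cQ p ^ p := Real.rpow_pos_of_pos hcQ p
  have hc1 : 0 < c₁ p := by unfold c₁; exact c1_pos hp
  set I : ℝ := ∫ x : ℝ, Q p x ^ p * Real.exp (-x) with hIdef
  have hck : c₁ p * κ p = cQ p * I := by
    rw [κ, ← hIdef]
    field_simp
  have hMint : Integrable (fun y : ℝ => Real.exp (-(p * |y|) + (-(3/2)) * y)) :=
    integrable_exp_comb (by linarith) (by linarith)
  set M : ℝ := ∫ y : ℝ, Real.exp (-(p * |y|) + (-(3/2)) * y) with hMdef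
  have hM0 : 0 ≤ M := integral_nonneg fun y => (Real.exp_pos _).le
  set CA : ℝ := 2 * (cQ p ^ p * cQ p) / (p - 1) with hCA
  set CB : ℝ := cQ p ^ p * (3 * cQ p) * M with hCB
  have hCA0 : 0 ≤ CA := by
    apply div_nonneg _ (by linarith)
    nlinarith
  have hCB0 : 0 ≤ CB := by
    rw [hCB]
    exact mul_nonneg (mul_nonneg hcQp.le (by linarith)) hM0
  refine ⟨CA + CB + 1, by linarith, 1, one_pos, fun z hz => ?_⟩
  have hz0 : 0 < z := lt_of_lt_of_le one_pos hz
  -- the subtracted integral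
  have hint2eq : (fun y : ℝ => Q p y ^ p * (cQ p * Real.exp (-(y + z))))
      = fun y : ℝ => (cQ p * Real.exp (-z)) * (Q p y ^ p * Real.exp (-y)) := by
    funext y
    rw [show -(y + z) = -y + -z by ring, Real.exp_add]
    ring
  have hint2 : Integrable (fun y : ℝ => Q p y ^ p * (cQ p * Real.exp (-(y + z)))) := by
    rw [hint2eq]
    exact (int_Qp_exp hp).const_mul _
  have hint1 := int_QpQ hp z
  have hval2 : (∫ y : ℝ, Q p y ^ p * (cQ p * Real.exp (-(y + z)))) = cQ p * I * Real.exp (-z) := by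
    rw [hint2eq, integral_const_mul, ← hIdef]
    ring
  set g : ℝ → ℝ := fun y => Q p y ^ p * Q p (y + z) - Q p y ^ p * (cQ p * Real.exp (-(y + z)))
    with hgdef
  have key : (∫ y : ℝ, Q p y ^ p * Q p (y + z)) - c₁ p * κ p * Real.exp (-z) = ∫ y : ℝ, g y := by
    rw [hck, hgdef, integral_sub hint1 hint2, hval2]
  rw [key]
  have hgint : Integrable g := hint1.sub hint2
  have habs : |∫ y : ℝ, g y| ≤ ∫ y : ℝ, |g y| := by
    simpa [Real.norm_eq_abs] using norm_integral_le_integral_norm g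
  have hsplit : (∫ y : ℝ, |g y|)
      = (∫ y in Iic (-(z/2)), |g y|) + ∫ y in Ioi (-(z/2)), |g y| :=
    (intervalIntegral.integral_Iic_add_Ioi hgint.abs.integrableOn hgint.abs.integrableOn).symm
  -- pointwise bound, part A
  have bndA : ∀ y ∈ Iic (-(z/2)), |g y|
      ≤ (2 * (cQ p ^ p * cQ p) * Real.exp (-z)) * Real.exp ((p - 1) * y) := by
    intro y hy
    rw [mem_Iic] at hy
    have hyneg : y ≤ 0 := by linarith
    have h1 : |g y| = Q p y ^ p * |Q p (y + z) - cQ p * Real.exp (-(y + z))| := by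
      rw [hgdef]
      show |Q p y ^ p * Q p (y + z) - Q p y ^ p * (cQ p * Real.exp (-(y + z)))| = _
      rw [show Q p y ^ p * Q p (y + z) - Q p y ^ p * (cQ p * Real.exp (-(y + z)))
        = Q p y ^ p * (Q p (y + z) - cQ p * Real.exp (-(y + z))) by ring,
        abs_mul, abs_of_pos (Qp_pos hp y)]
    have h2 : |Q p (y + z) - cQ p * Real.exp (-(y + z))| ≤ 2 * cQ p * Real.exp (-(y + z)) := by
      have := Q_le hp (y + z)
      have := Q_pos hp (y + z)
      rw [abs_le]
      constructor <;> nlinarith [Real.exp_pos (-(y + z))]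
    have h3 : Q p y ^ p ≤ cQ p ^ p * Real.exp (p * y) := by
      have := Q_rpow_le hp y
      rwa [abs_of_nonpos hyneg, show -(p * -y) = p * y by ring] at this
    calc |g y| = Q p y ^ p * |Q p (y + z) - cQ p * Real.exp (-(y + z))| := h1
      _ ≤ (cQ p ^ p * Real.exp (p * y)) * (2 * cQ p * Real.exp (-(y + z))) := by
          apply mul_le_mul h3 h2 (abs_nonneg _)
          exact mul_nonneg hcQp.le (Real.exp_pos _).le
      _ = (2 * (cQ p ^ p * cQ p) * Real.exp (-z)) * Real.exp ((p - 1) * y) := by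
          rw [show -(y + z) = -y + -z by ring, Real.exp_add,
            show (p - 1) * y = p * y + -y by ring, Real.exp_add]
          ring
  -- pointwise bound, part B
  have bndB : ∀ y ∈ Ioi (-(z/2)), |g y|
      ≤ (cQ p ^ p * (3 * cQ p) * Real.exp (-(3/2) * z))
        * Real.exp (-(p * |y|) + (-(3/2)) * y) := by
    intro y hy
    rw [mem_Ioi] at hy
    have hyz : 0 ≤ y + z := by linarith
    have h1 : |g y| = Q p y ^ p * |Q p (y + z) - cQ p * Real.exp (-(y + z))| := by
      rw [hgdef]
      show |Q p y ^ p * Q p (y + z) - Q p y ^ p * (cQ p * Real.exp (-(y + z)))| = _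
      rw [show Q p y ^ p * Q p (y + z) - Q p y ^ p * (cQ p * Real.exp (-(y + z)))
        = Q p y ^ p * (Q p (y + z) - cQ p * Real.exp (-(y + z))) by ring,
        abs_mul, abs_of_pos (Qp_pos hp y)]
    have h2 : |Q p (y + z) - cQ p * Real.exp (-(y + z))|
        ≤ 3 * cQ p * Real.exp (-(p * (y + z))) := E_bound_pos hp hyz
    have h2' : |Q p (y + z) - cQ p * Real.exp (-(y + z))|
        ≤ 3 * cQ p * Real.exp (-(3/2) * (y + z)) := by
      refine h2.trans ?_
      apply mul_le_mul_of_nonneg_left _ (by linarith)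
      apply Real.exp_le_exp.mpr
      nlinarith
    calc |g y| = Q p y ^ p * |Q p (y + z) - cQ p * Real.exp (-(y + z))| := h1
      _ ≤ (cQ p ^ p * Real.exp (-(p * |y|))) * (3 * cQ p * Real.exp (-(3/2) * (y + z))) := by
          apply mul_le_mul (Q_rpow_le hp y) h2' (abs_nonneg _)
          exact mul_nonneg hcQp.le (Real.exp_pos _).le
      _ = (cQ p ^ p * (3 * cQ p) * Real.exp (-(3/2) * z))
            * Real.exp (-(p * |y|) + (-(3/2)) * y) := by
          rw [show (-(3/2) : ℝ) * (y + z) = -(3/2) * y + -(3/2) * z by ring, Real.exp_add,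
            Real.exp_add]
          ring
  -- integrate part A
  have hA : (∫ y in Iic (-(z/2)), |g y|) ≤ CA * Real.exp (-(3/2) * z) := by
    have hintA : IntegrableOn
        (fun y : ℝ => (2 * (cQ p ^ p * cQ p) * Real.exp (-z)) * Real.exp ((p - 1) * y))
        (Iic (-(z/2))) :=
      (integrableOn_exp_mul_Iic' (by linarith) _).const_mul _
    have := setIntegral_mono_on hgint.abs.integrableOn hintA measurableSet_Iic bndA
    refine this.trans ?_
    rw [integral_const_mul, integral_exp_mul_Iic' (by linarith : (0:ℝ) < p - 1)]
    have hnn : 0 ≤ 2 * (cQ p ^ p * cQ p) / (p - 1) := hCA0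
    have hexp : Real.exp (-z) * Real.exp ((p - 1) * -(z/2)) ≤ Real.exp (-(3/2) * z) := by
      rw [← Real.exp_add]
      apply Real.exp_le_exp.mpr
      nlinarith
    calc 2 * (cQ p ^ p * cQ p) * Real.exp (-z) * (Real.exp ((p - 1) * -(z/2)) / (p - 1))
        = (2 * (cQ p ^ p * cQ p) / (p - 1)) * (Real.exp (-z) * Real.exp ((p - 1) * -(z/2))) := by
          ring
      _ ≤ (2 * (cQ p ^ p * cQ p) / (p - 1)) * Real.exp (-(3/2) * z) :=
          mul_le_mul_of_nonneg_left hexp hnn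
      _ = CA * Real.exp (-(3/2) * z) := by rw [hCA]
  have hB : (∫ y in Ioi (-(z/2)), |g y|) ≤ CB * Real.exp (-(3/2) * z) := by
    have hintB : IntegrableOn
        (fun y : ℝ => (cQ p ^ p * (3 * cQ p) * Real.exp (-(3/2) * z))
          * Real.exp (-(p * |y|) + (-(3/2)) * y)) (Ioi (-(z/2))) :=
      (hMint.const_mul _).integrableOn
    have h := setIntegral_mono_on hgint.abs.integrableOn hintB measurableSet_Ioi bndB
    refine h.trans ?_
    rw [integral_const_mul]
    have hle : (∫ y in Ioi (-(z/2)), Real.exp (-(p * |y|) + (-(3/2)) * y)) ≤ M := by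
      rw [hMdef]
      exact setIntegral_le_integral hMint
        (Filter.Eventually.of_forall fun y => (Real.exp_pos _).le)
    have hnn : 0 ≤ cQ p ^ p * (3 * cQ p) * Real.exp (-(3/2) * z) :=
      mul_nonneg (mul_nonneg hcQp.le (by linarith)) (Real.exp_pos _).le
    calc cQ p ^ p * (3 * cQ p) * Real.exp (-(3/2) * z)
          * ∫ y in Ioi (-(z/2)), Real.exp (-(p * |y|) + (-(3/2)) * y)
        ≤ cQ p ^ p * (3 * cQ p) * Real.exp (-(3/2) * z) * M := mul_le_mul_of_nonneg_left hle hnn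
      _ = CB * Real.exp (-(3/2) * z) := by rw [hCB]; ring
  calc |∫ y : ℝ, g y| ≤ ∫ y : ℝ, |g y| := habs
    _ = (∫ y in Iic (-(z/2)), |g y|) + ∫ y in Ioi (-(z/2)), |g y| := hsplit
    _ ≤ CA * Real.exp (-(3/2) * z) + CB * Real.exp (-(3/2) * z) := add_le_add hA hB
    _ ≤ (CA + CB + 1) * Real.exp (-(3/2) * z) := by nlinarith [Real.exp_pos (-(3/2) * z)]

end Main
end

section
/- Let p > 2. If v : ℝ → ℝ is a twice continuously differentiable square-integrable function satisfying −v''(x) + v(x) − p·Q(x)^(p−1)·v(x) = 0 for all x ∈ ℝ, then v is a scalar multiple of Q'. -/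
set_option maxHeartbeats 1000000

open MeasureTheory

namespace LOK
open Real
variable (p : ℝ)
noncomputable def al : ℝ := (p-1)/2
noncomputable def be : ℝ := 2/(p-1)
noncomputable def A : ℝ := ((p+1)/2) ^ ((1:ℝ)/(p-1))
noncomputable def ch (x : ℝ) : ℝ := Real.cosh (al p * x)
noncomputable def sh (x : ℝ) : ℝ := Real.sinh (al p * x)
noncomputable def Q1 (x : ℝ) : ℝ := -A p * ch p x ^ (-be p - 1) * sh p x
noncomputable def Q2 (x : ℝ) : ℝ :=
  A p * al p * ((be p + 1) * ch p x ^ (-be p - 2) * sh p x ^ 2 - ch p x ^ (-be p))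
noncomputable def V (x : ℝ) : ℝ := p*(p+1)/(2 * ch p x ^ 2)
variable {p}
lemma ch_pos (x : ℝ) : 0 < ch p x := Real.cosh_pos _
lemma ch_ne (x : ℝ) : ch p x ≠ 0 := (ch_pos x).ne'
lemma one_le_ch (x : ℝ) : 1 ≤ ch p x := Real.one_le_cosh _

lemma hasDerivAt_ch (x : ℝ) : HasDerivAt (ch p) (al p * sh p x) x := by
  have h : HasDerivAt (fun y : ℝ => al p * y) (al p) x := by
    simpa using (hasDerivAt_id x).const_mul (al p)
  exact ((Real.hasDerivAt_cosh (al p * x)).comp x h).congr_deriv (by simp [sh, mul_comm])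

lemma hasDerivAt_sh (x : ℝ) : HasDerivAt (sh p) (al p * ch p x) x := by
  have h : HasDerivAt (fun y : ℝ => al p * y) (al p) x := by
    simpa using (hasDerivAt_id x).const_mul (al p)
  exact ((Real.hasDerivAt_sinh (al p * x)).comp x h).congr_deriv (by simp [ch, mul_comm])

lemma hasDerivAt_chpow (r : ℝ) (x : ℝ) :
    HasDerivAt (fun y => ch p y ^ r) (al p * sh p x * r * ch p x ^ (r - 1)) x :=
  (hasDerivAt_ch x).rpow_const (Or.inl (ch_ne x))

lemma chpow_sub_one (r : ℝ) (x : ℝ) : ch p x ^ r = ch p x ^ (r - 1) * ch p x := by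
  rw [← Real.rpow_add_one (ch_ne x) (r-1)]; ring_nf

section
variable (hp : 2 < p)
include hp

lemma hpne : p - 1 ≠ 0 := by intro h; linarith
lemma albe : al p * be p = 1 := by
  have := hpne hp; unfold al be; field_simp

lemma Q_eq (x : ℝ) : Q p x = A p * ch p x ^ (-be p) := by
  have h1 : (p + 1) / (2 * Real.cosh ((p - 1) / 2 * x) ^ 2)
      = ((p+1)/2) / (ch p x ^ (2:ℕ)) := by
    unfold ch al; ring
  rw [Q, h1, Real.div_rpow (by linarith) (by positivity), ← Real.rpow_natCast (ch p x) 2,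
    ← Real.rpow_mul (ch_pos (p := p) x).le]
  rw [div_eq_mul_inv, ← Real.rpow_neg (ch_pos (p := p) x).le]
  rw [A, be]
  norm_num
  left; ring_nf

lemma Q_pow (x : ℝ) : p * Q p x ^ (p-1) = V p x := by
  have h0 : (0:ℝ) ≤ (p + 1) / (2 * Real.cosh ((p - 1) / 2 * x) ^ 2) := by positivity
  rw [Q, ← Real.rpow_mul h0, one_div, inv_mul_cancel₀ (hpne hp), Real.rpow_one, V]
  unfold ch al; ring

lemma hasDerivAt_Q (x : ℝ) : HasDerivAt (Q p) (Q1 p x) x := by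
  have h := (hasDerivAt_chpow (p := p) (-be p) x).const_mul (A p)
  have he : ∀ y, Q p y = A p * ch p y ^ (-be p) := Q_eq hp
  rw [funext he]
  convert (show HasDerivAt (F := ℝ) _ _ x from h) using 1
  have hab := albe hp
  rw [Q1]
  linear_combination (A p * ch p x ^ (-be p - 1) * sh p x) * hab

lemma hasDerivAt_Q1 (x : ℝ) : HasDerivAt (Q1 p) (Q2 p x) x := by
  have h := (((hasDerivAt_chpow (p := p) (-be p - 1) x).mul (hasDerivAt_sh (p := p) x)).const_mul
    (-A p))
  convert (show HasDerivAt (F := ℝ) _ _ x from h) using 1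
  · funext y; rw [Q1, Pi.mul_apply]; ring
  have e2 : ch p x ^ (-be p - 1) = ch p x ^ (-be p - 2) * ch p x := by
    rw [← Real.rpow_add_one (ch_ne x) (-be p - 2)]; ring_nf
  have e1 : ch p x ^ (-be p) = ch p x ^ (-be p - 2) * ch p x * ch p x := by
    rw [chpow_sub_one (-be p) x, e2]
  rw [Q2, show (-be p - 1 - 1 : ℝ) = -be p - 2 by ring, e1, e2]
  ring
end

section
variable (hp : 2 < p)
include hp

lemma hasDerivAt_Q2 (x : ℝ) : HasDerivAt (Q2 p) (Q1 p x - V p x * Q1 p x) x := by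
  have h1 := hasDerivAt_chpow (p := p) (-be p - 2) x
  have h2 := (hasDerivAt_sh (p := p) x).pow 2
  have h3 := hasDerivAt_chpow (p := p) (-be p) x
  have h := (((h1.mul h2).const_mul (be p + 1)).sub h3).const_mul (A p * al p)
  convert (show HasDerivAt (F := ℝ) _ _ x from h) using 1
  · funext y; rw [Q2]; simp only [Pi.mul_apply, Pi.pow_apply, Pi.sub_apply]; ring
  have hs : sh p x ^ 2 = ch p x ^ 2 - 1 := by unfold sh ch; rw [Real.sinh_sq]
  have eB : ch p x ^ (-be p - 2) = ch p x ^ (-be p - 3) * ch p x := by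
    rw [← Real.rpow_add_one (ch_ne x) (-be p - 3)]; ring_nf
  have eA : ch p x ^ (-be p - 2 - 1) = ch p x ^ (-be p - 3) := by
    rw [show (-be p - 2 - 1 : ℝ) = -be p - 3 by ring]
  have eC : ch p x ^ (-be p - 1) = ch p x ^ (-be p - 3) * ch p x * ch p x := by
    rw [show (-be p - 1 : ℝ) = (-be p - 2) + 1 by ring, Real.rpow_add_one (ch_ne x), eB]
  rw [Q1, V, eA, eB, eC, Pi.pow_apply, hs]
  have hcn := ch_ne (p := p) x
  have hpn := hpne hp
  unfold al be
  push_cast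
  field_simp
  ring
end

section
variable (hp : 2 < p)
include hp

lemma al_pos : 0 < al p := by unfold al; linarith
lemma be_pos : 0 < be p := by
  unfold be
  have h : (0:ℝ) < p - 1 := by linarith
  positivity
lemma A_pos : 0 < A p := Real.rpow_pos_of_pos (by linarith) _

lemma chpow_neg_be_le_one (x : ℝ) : ch p x ^ (-be p) ≤ 1 :=
  Real.rpow_le_one_of_one_le_of_nonpos (one_le_cosh _) (by linarith [be_pos hp])

lemma abs_sh_le (x : ℝ) : |sh p x| ≤ ch p x := by
  have hs : sh p x ^ 2 = ch p x ^ 2 - 1 := by unfold sh ch; rw [Real.sinh_sq]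
  have h1 := ch_pos (p := p) x
  have h2 := abs_nonneg (sh p x)
  nlinarith [sq_abs (sh p x)]

lemma abs_Q1_le_pow (x : ℝ) : |Q1 p x| ≤ A p * ch p x ^ (-be p) := by
  have hA := A_pos hp
  have hcp := Real.rpow_pos_of_pos (ch_pos (p := p) x) (-be p - 1)
  have e : ch p x ^ (-be p) = ch p x ^ (-be p - 1) * ch p x := by
    rw [← Real.rpow_add_one (ch_ne x) (-be p - 1)]; ring_nf
  rw [Q1, abs_mul, abs_mul, abs_neg, abs_of_pos hA, abs_of_pos hcp, e, mul_assoc]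
  have h4 : ch p x ^ (-be p - 1) * |sh p x| ≤ ch p x ^ (-be p - 1) * ch p x :=
    mul_le_mul_of_nonneg_left (abs_sh_le hp x) hcp.le
  exact mul_le_mul_of_nonneg_left h4 hA.le

lemma abs_Q1_le (x : ℝ) : |Q1 p x| ≤ A p := by
  have h := abs_Q1_le_pow hp x
  have h2 := chpow_neg_be_le_one hp x
  nlinarith [A_pos hp]

lemma abs_Q2_le (x : ℝ) : |Q2 p x| ≤ A p * al p * (be p + 2) := by
  have hA := A_pos hp
  have hal := al_pos hp
  have hbe := be_pos hp
  have hs : sh p x ^ 2 = ch p x ^ 2 - 1 := by unfold sh ch; rw [Real.sinh_sq]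
  have e : ch p x ^ (-be p) = ch p x ^ (-be p - 2) * ch p x * ch p x := by
    nth_rewrite 1 [show (-be p : ℝ) = (-be p - 2) + 1 + 1 by ring]
    rw [Real.rpow_add_one (ch_ne x), Real.rpow_add_one (ch_ne x)]
  have h1 : (0:ℝ) < ch p x ^ (-be p - 2) := Real.rpow_pos_of_pos (ch_pos x) _
  have h2 := chpow_neg_be_le_one hp x
  have h3 := ch_pos (p := p) x
  rw [Q2, abs_mul, abs_of_pos (mul_pos hA hal)]
  have hb : |(be p + 1) * ch p x ^ (-be p - 2) * sh p x ^ 2 - ch p x ^ (-be p)| ≤ be p + 2 := by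
    rw [abs_le]
    constructor
    · have : (0:ℝ) ≤ (be p + 1) * ch p x ^ (-be p - 2) * sh p x ^ 2 := by positivity
      nlinarith
    · have hle : ch p x ^ (-be p - 2) * sh p x ^ 2 ≤ ch p x ^ (-be p) := by
        rw [e, hs]; nlinarith
      have : (0:ℝ) < ch p x ^ (-be p) := Real.rpow_pos_of_pos (ch_pos x) _
      nlinarith
  exact mul_le_mul_of_nonneg_left hb (mul_pos hA hal).le
lemma Q1_zero : Q1 p 0 = 0 := by
  simp [Q1, sh]

lemma Q2_zero_ne : Q2 p 0 ≠ 0 := by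
  have : Q2 p 0 = -(A p * al p) := by
    simp [Q2, sh, ch, Real.rpow_natCast]
  rw [this]
  have := A_pos hp; have := al_pos hp
  intro h; nlinarith

lemma tendsto_Q1 : Filter.Tendsto (fun x => |Q1 p x|) Filter.atTop (nhds 0) := by
  have hcosh : Filter.Tendsto Real.cosh Filter.atTop Filter.atTop := by
    apply Filter.tendsto_atTop_mono (f := fun x => Real.exp x / 2)
    · intro x
      rw [Real.cosh_eq]
      have := Real.exp_pos (-x)
      linarith
    · exact (Real.tendsto_exp_atTop).atTop_div_const two_pos
  have hax : Filter.Tendsto (fun x : ℝ => al p * x) Filter.atTop Filter.atTop :=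
    Filter.Tendsto.const_mul_atTop (al_pos hp) Filter.tendsto_id
  have hch : Filter.Tendsto (fun x => ch p x) Filter.atTop Filter.atTop := hcosh.comp hax
  have hrp : Filter.Tendsto (fun x => A p * ch p x ^ (-be p)) Filter.atTop (nhds 0) := by
    have := (tendsto_rpow_neg_atTop (be_pos hp)).comp hch
    simpa using this.const_mul (A p)
  apply squeeze_zero (fun x => abs_nonneg _) (fun x => abs_Q1_le_pow hp x)
  exact hrp

lemma V_nonneg (x : ℝ) : 0 ≤ V p x := by
  have := ch_pos (p := p) x; unfold V; positivity

lemma V_le (x : ℝ) : V p x ≤ p * (p+1) / 2 := by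
  have h1 := one_le_ch (p := p) x
  rw [V, div_le_div_iff₀ (by positivity) two_pos]
  have hp0 : (0:ℝ) < p := by linarith
  nlinarith [mul_le_mul_of_nonneg_left (by nlinarith : (1:ℝ) ≤ ch p x ^ 2)
    (by nlinarith : (0:ℝ) ≤ p * (p+1))]
end

lemma ode_uniq {q w w' : ℝ → ℝ} {K1 : ℝ}
    (hw : ∀ x, HasDerivAt w (w' x) x)
    (hw' : ∀ x, HasDerivAt w' (q x * w x) x)
    (hq : ∀ x, |q x| ≤ K1)
    (h0 : w 0 = 0) (h0' : w' 0 = 0) : ∀ x, w x = 0 := by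
  set E : ℝ → ℝ := fun x => w x ^ 2 + w' x ^ 2 with hEdef
  set E' : ℝ → ℝ := fun x => 2 * w x * w' x + 2 * w' x * (q x * w x) with hE'def
  have hE : ∀ x, HasDerivAt E (E' x) x := by
    intro x
    have h := ((hw x).pow 2).add ((hw' x).pow 2)
    convert (show HasDerivAt (F := ℝ) _ _ x from h) using 1
    · rfl
    simp only [hE'def]
    push_cast
    ring
  have hEnn : ∀ x, 0 ≤ E x := fun x => by positivity
  have key : ∀ x, |E' x| ≤ (K1 + 1) * |E x| := by
    intro x
    have e : E' x = 2 * (w x * w' x) * (1 + q x) := by simp [hE'def]; ring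
    have h1 : |1 + q x| ≤ 1 + K1 := (abs_add_le 1 (q x)).trans (by simp [hq x])
    have h2 : 2 * |w x * w' x| ≤ E x := by
      simp only [hEdef]
      rw [abs_mul]
      nlinarith [sq_nonneg (|w x| - |w' x|), sq_abs (w x), sq_abs (w' x)]
    have h3 : (0:ℝ) ≤ |w x * w' x| := abs_nonneg _
    rw [e, abs_of_nonneg (hEnn x), abs_mul, abs_mul]
    have h4 : |(2:ℝ)| = 2 := by norm_num
    rw [h4]
    have h5 : (0:ℝ) ≤ 1 + K1 := le_trans (abs_nonneg _) h1
    calc 2 * |w x * w' x| * |1 + q x| ≤ 2 * |w x * w' x| * (1 + K1) :=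
          mul_le_mul_of_nonneg_left h1 (by positivity)
      _ ≤ E x * (1 + K1) := mul_le_mul_of_nonneg_right h2 h5
      _ = (K1 + 1) * E x := by ring
  have hE0 : E 0 = 0 := by simp [hEdef, h0, h0']
  have main : ∀ x, 0 ≤ x → E x = 0 := by
    intro x hx
    have h := norm_le_gronwallBound_of_norm_deriv_right_le (f := E) (f' := E')
      (δ := 0) (K := K1 + 1) (ε := 0) (a := 0) (b := x)
      (fun t _ => (hE t).continuousAt.continuousWithinAt)
      (fun t _ => (hE t).hasDerivWithinAt)
      (by simp [Real.norm_eq_abs, hE0])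
      (fun t _ => by simpa [Real.norm_eq_abs] using key t)
      x ⟨hx, le_refl x⟩
    rw [gronwallBound_ε0_δ0] at h
    have := hEnn x
    have habs : |E x| ≤ 0 := by simpa [Real.norm_eq_abs] using h
    exact le_antisymm (le_trans (le_abs_self _) habs) (hEnn x)
  have mainneg : ∀ x, x ≤ 0 → E x = 0 := by
    intro x hx
    set F : ℝ → ℝ := fun t => E (-t) with hF
    have hFd : ∀ t, HasDerivAt F (-(E' (-t))) t := by
      intro t
      have hneg : HasDerivAt (fun s : ℝ => -s) (-1) t := by
        exact (show HasDerivAt (F := ℝ) _ _ t from (hasDerivAt_id t).neg)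
      exact (show HasDerivAt (F := ℝ) _ _ t from (hE (-t)).comp t hneg).congr_deriv (by ring)
    have h := norm_le_gronwallBound_of_norm_deriv_right_le (f := F) (f' := fun t => -(E' (-t)))
      (δ := 0) (K := K1 + 1) (ε := 0) (a := 0) (b := -x)
      (fun t _ => (hFd t).continuousAt.continuousWithinAt)
      (fun t _ => (hFd t).hasDerivWithinAt)
      (by simp [hF, Real.norm_eq_abs, hE0])
      (fun t _ => by simpa [hF, Real.norm_eq_abs] using key (-t))
      (-x) ⟨by linarith, le_refl _⟩
    rw [gronwallBound_ε0_δ0] at h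
    have h2 : F (-x) = E x := by simp [hF]
    have habs : |E x| ≤ 0 := by
      rw [← h2]
      simpa [Real.norm_eq_abs] using h
    exact le_antisymm (le_trans (le_abs_self _) habs) (hEnn x)
  intro x
  have hEx : E x = 0 := by
    rcases le_or_gt 0 x with h | h
    · exact main x h
    · exact mainneg x h.le
  have hEx' : w x ^ 2 + w' x ^ 2 = 0 := by simpa [hEdef] using hEx
  have h2 : w x ^ 2 = 0 := by nlinarith [sq_nonneg (w x), sq_nonneg (w' x)]
  exact pow_eq_zero_iff (n := 2) (by norm_num) |>.mp h2

end LOK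

open LOK Filter in
theorem linearized_operator_kernel (p : ℝ) (hp : 2 < p) (v : ℝ → ℝ)
    (hv : ContDiff ℝ 2 v)
    (hL2 : Integrable (fun x => v x ^ 2))
    (heq : ∀ x : ℝ, -(deriv (deriv v) x) + v x - p * Q p x ^ (p - 1) * v x = 0) :
    ∃ c : ℝ, ∀ x : ℝ, v x = c * deriv (Q p) x := by
  -- basic facts
  set C : ℝ := p * (p + 1) / 2 with hC
  have hC0 : 0 < C := by rw [hC]; nlinarith
  have hd2 : ∀ x, deriv (deriv v) x = v x - V p x * v x := by
    intro x
    have h1 := heq x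
    rw [← Q_pow hp x]
    linarith
  have hv1 : ∀ x, HasDerivAt v (deriv v x) x := fun x =>
    ((hv.differentiable (by norm_num)) x).hasDerivAt
  have hvd : Differentiable ℝ (deriv v) := by
    have h2 : ContDiff ℝ ((1 : ℕ) + 1 : WithTop ℕ∞) v := by
      norm_num
      exact hv
    exact ((contDiff_succ_iff_deriv.mp h2).2.2).differentiable (by norm_num)
  have hv2 : ∀ x, HasDerivAt (deriv v) (deriv (deriv v) x) x := fun x => (hvd x).hasDerivAt
  have hVcont : Continuous (V p) := by
    unfold V ch
    exact continuous_const.div (by continuity) (fun x => by positivity)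
  set g : ℝ → ℝ := fun x => v x - V p x * v x with hg
  have hgcont : Continuous g := by
    exact (hv.continuous).sub (hVcont.mul hv.continuous)
  have hd2' : deriv (deriv v) = g := funext hd2
  have habsg : ∀ x, |g x| ≤ (1 + C) * (v x ^ 2 + 1) / 2 := by
    intro x
    have h1 : |g x| = |1 - V p x| * |v x| := by
      rw [hg, ← abs_mul]; ring_nf
    have h2 : |1 - V p x| ≤ 1 + C := by
      rw [abs_le]
      constructor
      · have := V_le hp x; rw [← hC] at this; linarith
      · have := V_nonneg hp x; linarith
    have h3 : |v x| ≤ (v x ^ 2 + 1) / 2 := by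
      nlinarith [sq_abs (v x), sq_nonneg (|v x| - 1), abs_nonneg (v x)]
    calc |g x| = |1 - V p x| * |v x| := h1
      _ ≤ (1 + C) * ((v x ^ 2 + 1) / 2) :=
          mul_le_mul h2 h3 (abs_nonneg _) (by linarith)
      _ = (1 + C) * (v x ^ 2 + 1) / 2 := by ring
  -- the Wronskian
  set W : ℝ → ℝ := fun x => v x * Q2 p x - deriv v x * Q1 p x with hWdef
  have hW : ∀ x, HasDerivAt W 0 x := by
    intro x
    have h := ((hv1 x).mul (hasDerivAt_Q2 hp x)).sub ((hv2 x).mul (hasDerivAt_Q1 hp x))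
    convert (show HasDerivAt (F := ℝ) _ _ x from h) using 1
    · rfl
    rw [hd2 x]
    ring
  have hWconst : ∀ x y : ℝ, W x = W y :=
    is_const_of_deriv_eq_zero (fun x => (hW x).differentiableAt) (fun x => (hW x).deriv)
  -- total mass
  set T : ℝ := ∫ x, v x ^ 2 with hT
  have hvsq_nn : 0 ≤ᵐ[volume] fun x => v x ^ 2 := Filter.Eventually.of_forall fun x => sq_nonneg _
  have hvsq_nn' : ∀ s : Set ℝ, 0 ≤ᵐ[volume.restrict s] fun x => v x ^ 2 :=
    fun s => Filter.Eventually.of_forall fun x => sq_nonneg _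
  have hIle : ∀ s : Set ℝ, ∫ x in s, v x ^ 2 ≤ T := fun s =>
    setIntegral_le_integral hL2 hvsq_nn
  have hT0 : 0 ≤ T := integral_nonneg fun x => sq_nonneg _
  -- tail integrals
  set I : ℕ → ℝ := fun n => ∫ x in Set.Icc (n : ℝ) (n + 3), v x ^ 2 with hI
  have hInn : ∀ n, 0 ≤ I n := fun n => setIntegral_nonneg measurableSet_Icc fun x _ => sq_nonneg _
  have htail : Tendsto I atTop (nhds 0) := by
    have hJ : Tendsto (fun n : ℕ => ∫ x in Set.Ici (n : ℝ), v x ^ 2) atTop (nhds 0) := by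
      have h := tendsto_setIntegral_of_antitone (f := fun x => v x ^ 2) (μ := volume)
        (s := fun n : ℕ => Set.Ici (n : ℝ))
        (fun i => measurableSet_Ici)
        (fun i j hij => Set.Ici_subset_Ici.mpr (by exact_mod_cast hij))
        ⟨0, hL2.integrableOn⟩
      have hempty : ⋂ n : ℕ, Set.Ici (n : ℝ) = ∅ := by
        ext x
        simp only [Set.mem_iInter, Set.mem_Ici, Set.mem_empty_iff_false, iff_false, not_forall]
        obtain ⟨n, hn⟩ := exists_nat_gt x
        exact ⟨n, by push_neg; exact hn⟩
      rwa [hempty, setIntegral_empty] at h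
    apply squeeze_zero hInn _ hJ
    intro n
    apply setIntegral_mono_set hL2.integrableOn (hvsq_nn' _)
    exact Filter.Eventually.of_forall fun x hx => hx.1
  -- choose good points
  have Hsel : ∀ (n : ℕ) (l r : ℝ), (l : ℝ) + 1 = r → (n : ℝ) ≤ l → r ≤ (n : ℝ) + 3 →
      ∃ a ∈ Set.Icc l r, v a ^ 2 < I n + 1 / (n + 1) := by
    intro n l r hlr hnl hrn
    by_contra hcon
    push_neg at hcon
    have hmeas : MeasurableSet (Set.Icc l r) := measurableSet_Icc
    have hle := setIntegral_ge_of_const_le (μ := volume) (c := I n + 1 / (n + 1)) hmeas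
      (by rw [Real.volume_Icc]; exact ENNReal.ofReal_ne_top)
      hcon hL2.integrableOn
    rw [Real.volume_real_Icc_of_le (by linarith)] at hle
    have hvol : (r - l) = 1 := by linarith
    rw [hvol] at hle
    simp only [ENNReal.toReal_ofReal zero_le_one, mul_one, one_smul] at hle
    have hsub : ∫ x in Set.Icc l r, v x ^ 2 ≤ I n := by
      apply setIntegral_mono_set hL2.integrableOn (hvsq_nn' _)
      apply Filter.Eventually.of_forall
      intro x hx
      exact ⟨le_trans hnl hx.1, le_trans hx.2 hrn⟩
    have hpos : (0:ℝ) < 1 / (n + 1) := by positivity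
    linarith
  have Ha : ∀ n : ℕ, ∃ a ∈ Set.Icc (n : ℝ) (n + 1), v a ^ 2 < I n + 1 / (n + 1) :=
    fun n => Hsel n n (n + 1) rfl le_rfl (by linarith)
  have Hb : ∀ n : ℕ, ∃ b ∈ Set.Icc ((n : ℝ) + 2) (n + 3), v b ^ 2 < I n + 1 / (n + 1) :=
    fun n => Hsel n (n + 2) (n + 3) (by ring) (by linarith) le_rfl
  choose a ha hva using Ha
  choose b hb hvb using Hb
  set ε : ℕ → ℝ := fun n => I n + 1 / (n + 1) with hε
  have hεpos : ∀ n, 0 < ε n := fun n => by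
    have := hInn n; have : (0:ℝ) < 1 / (n + 1) := by positivity
    simp only [hε]; linarith [hInn n]
  have hεle : ∀ n, ε n ≤ T + 1 := by
    intro n
    have h1 : I n ≤ T := hIle _
    have h2 : 1 / ((n : ℝ) + 1) ≤ 1 := by
      rw [div_le_one (by positivity)]; linarith [Nat.cast_nonneg (α := ℝ) n]
    simp only [hε]; linarith
  have hab : ∀ n, a n < b n := fun n => lt_of_le_of_lt (ha n).2 (lt_of_lt_of_le (by linarith) (hb n).1)
  have hba1 : ∀ n, 1 ≤ b n - a n := fun n => by
    have := (ha n).2; have := (hb n).1; linarith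
  have hba3 : ∀ n, b n - a n ≤ 3 := fun n => by
    have := (ha n).1; have := (hb n).2; linarith
  have hva' : ∀ n, |v (a n)| ≤ Real.sqrt (ε n) := by
    intro n
    rw [← Real.sqrt_sq_eq_abs]
    exact Real.sqrt_le_sqrt (le_of_lt (hva n))
  have hvb' : ∀ n, |v (b n)| ≤ Real.sqrt (ε n) := by
    intro n
    rw [← Real.sqrt_sq_eq_abs]
    exact Real.sqrt_le_sqrt (le_of_lt (hvb n))
  -- bound on deriv v at a n
  set M : ℝ := 2 * Real.sqrt (T + 1) + (1 + C) * (T + 3) / 2 with hM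
  have hMbound : ∀ n, |deriv v (a n)| ≤ M := by
    intro n
    obtain ⟨ξ, hξ, hslope⟩ := exists_hasDerivAt_eq_slope v (deriv v) (hab n)
      (hv.continuous.continuousOn) (fun x _ => hv1 x)
    have hsq : Real.sqrt (ε n) ≤ Real.sqrt (T + 1) :=
      Real.sqrt_le_sqrt (hεle n)
    have hslope_bd : |deriv v ξ| ≤ 2 * Real.sqrt (T + 1) := by
      rw [hslope, abs_div, abs_of_pos (by linarith [hab n] : (0:ℝ) < b n - a n)]
      have h1 : |v (b n) - v (a n)| ≤ 2 * Real.sqrt (ε n) := by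
        calc |v (b n) - v (a n)| ≤ |v (b n)| + |v (a n)| := abs_sub _ _
          _ ≤ 2 * Real.sqrt (ε n) := by linarith [hva' n, hvb' n]
      have hd : |v (b n) - v (a n)| / (b n - a n) ≤ |v (b n) - v (a n)| := by
        rw [div_le_iff₀ (by linarith [hab n] : (0:ℝ) < b n - a n)]
        nlinarith [abs_nonneg (v (b n) - v (a n)), hba1 n]
      calc |v (b n) - v (a n)| / (b n - a n) ≤ |v (b n) - v (a n)| := hd
        _ ≤ 2 * Real.sqrt (ε n) := h1
        _ ≤ 2 * Real.sqrt (T + 1) := by linarith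
    -- FTC between a n and ξ
    have haξ : a n ≤ ξ := le_of_lt hξ.1
    have hftc : ∫ x in a n..ξ, g x = deriv v ξ - deriv v (a n) := by
      rw [← hd2']
      exact intervalIntegral.integral_eq_sub_of_hasDerivAt (fun x _ => hv2 x)
        (by rw [hd2']; exact hgcont.intervalIntegrable _ _)
    have hint_bd : |∫ x in a n..ξ, g x| ≤ (1 + C) * (T + 3) / 2 := by
      have h1 : |∫ x in a n..ξ, g x| ≤ ∫ x in a n..ξ, |g x| := by
        rw [← Real.norm_eq_abs]
        refine (intervalIntegral.norm_integral_le_integral_norm haξ).trans_eq ?_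
        simp [Real.norm_eq_abs]
      have h2 : ∫ x in a n..ξ, |g x| ≤ ∫ x in a n..ξ, (1 + C) * (v x ^ 2 + 1) / 2 := by
        apply intervalIntegral.integral_mono_on haξ
          ((hgcont.abs).intervalIntegrable _ _)
          (((continuous_const.mul ((hv.continuous.pow 2).add continuous_const)).div_const 2
            ).intervalIntegrable _ _)
        intro x _
        exact habsg x
      have h3 : ∫ x in a n..ξ, (1 + C) * (v x ^ 2 + 1) / 2
          = (1 + C) / 2 * ((∫ x in a n..ξ, v x ^ 2) + (ξ - a n)) := by
        rw [show (fun x => (1 + C) * (v x ^ 2 + 1) / 2) = fun x => (1+C)/2 * v x ^ 2 + (1+C)/2 by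
              funext x; ring]
        rw [intervalIntegral.integral_add (f := fun x => (1+C)/2 * v x ^ 2) (g := fun _ => (1+C)/2)
              ((continuous_const.mul (hv.continuous.pow 2)).intervalIntegrable _ _)
              (continuous_const.intervalIntegrable _ _)]
        rw [intervalIntegral.integral_const_mul, intervalIntegral.integral_const]
        simp [smul_eq_mul]
        ring
      have h4 : ∫ x in a n..ξ, v x ^ 2 ≤ T := by
        rw [intervalIntegral.integral_of_le haξ]
        exact hIle _
      have h5 : ξ - a n ≤ 3 := by
        have := hξ.2; linarith [hba3 n]
      have h6 : (0:ℝ) ≤ ∫ x in a n..ξ, v x ^ 2 := by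
        rw [intervalIntegral.integral_of_le haξ]
        exact setIntegral_nonneg measurableSet_Ioc fun x _ => sq_nonneg _
      calc |∫ x in a n..ξ, g x| ≤ (1 + C) / 2 * ((∫ x in a n..ξ, v x ^ 2) + (ξ - a n)) := by
            linarith
        _ ≤ (1 + C) / 2 * (T + 3) := by
            apply mul_le_mul_of_nonneg_left _ (by linarith)
            have : a n ≤ ξ := haξ
            linarith
        _ = (1 + C) * (T + 3) / 2 := by ring
    have : |deriv v (a n)| ≤ |deriv v ξ| + |∫ x in a n..ξ, g x| := by
      have h := hftc
      have : deriv v (a n) = deriv v ξ - ∫ x in a n..ξ, g x := by linarith [hftc]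
      rw [this]
      exact (abs_sub _ _)
    rw [hM]
    linarith [hslope_bd, hint_bd]
  -- W is zero
  have hW0 : ∀ x, W x = 0 := by
    have hatop : Tendsto a atTop atTop := by
      apply tendsto_atTop_mono (fun n => (ha n).1)
      exact tendsto_natCast_atTop_atTop
    have hQ1a : Tendsto (fun n => |Q1 p (a n)|) atTop (nhds 0) :=
      (tendsto_Q1 hp).comp hatop
    have hsqε : Tendsto (fun n => Real.sqrt (ε n)) atTop (nhds 0) := by
      have hε0 : Tendsto ε atTop (nhds 0) := by
        have h2 : Tendsto (fun n : ℕ => 1 / ((n:ℝ) + 1)) atTop (nhds 0) :=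
          tendsto_one_div_add_atTop_nhds_zero_nat
        simpa [hε, one_div] using htail.add h2
      have := (Real.continuous_sqrt.tendsto 0).comp hε0
      simpa [Function.comp_def] using this
    set B2 : ℝ := A p * al p * (be p + 2) with hB2
    have hWbound : ∀ n, |W 0| ≤ Real.sqrt (ε n) * B2 + M * |Q1 p (a n)| := by
      intro n
      rw [hWconst 0 (a n)]
      calc |W (a n)| ≤ |v (a n)| * |Q2 p (a n)| + |deriv v (a n)| * |Q1 p (a n)| := by
            rw [hWdef]
            simp only
            calc |v (a n) * Q2 p (a n) - deriv v (a n) * Q1 p (a n)|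
                ≤ |v (a n) * Q2 p (a n)| + |deriv v (a n) * Q1 p (a n)| := abs_sub _ _
              _ = |v (a n)| * |Q2 p (a n)| + |deriv v (a n)| * |Q1 p (a n)| := by
                  rw [abs_mul, abs_mul]
        _ ≤ Real.sqrt (ε n) * B2 + M * |Q1 p (a n)| := by
            apply add_le_add
            · exact mul_le_mul (hva' n) (abs_Q2_le hp _) (abs_nonneg _) (Real.sqrt_nonneg _)
            · exact mul_le_mul_of_nonneg_right (hMbound n) (abs_nonneg _)
    have hlim : Tendsto (fun n => Real.sqrt (ε n) * B2 + M * |Q1 p (a n)|) atTop (nhds 0) := by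
      have h1 := hsqε.mul_const B2
      have h2 := hQ1a.const_mul M
      simpa using h1.add h2
    have h0 : |W 0| ≤ 0 := le_of_tendsto_of_tendsto tendsto_const_nhds hlim
      (Filter.Eventually.of_forall hWbound)
    intro x
    rw [hWconst x 0]
    exact abs_eq_zero.mp (le_antisymm h0 (abs_nonneg _))
  -- v 0 = 0
  have hv0 : v 0 = 0 := by
    have h := hW0 0
    rw [hWdef] at h
    simp only at h
    rw [Q1_zero hp] at h
    have h2 := Q2_zero_ne hp
    have : v 0 * Q2 p 0 = 0 := by linarith [h]
    rcases mul_eq_zero.mp this with h3 | h3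
    · exact h3
    · exact absurd h3 h2
  -- conclude with uniqueness
  set c : ℝ := deriv v 0 / Q2 p 0 with hc
  refine ⟨c, fun x => ?_⟩
  have hwzero : ∀ y, (fun x => v x - c * Q1 p x) y = 0 := by
    apply ode_uniq (q := fun x => 1 - V p x)
      (w' := fun x => deriv v x - c * Q2 p x) (K1 := 1 + C)
    · intro x
      exact (hv1 x).sub ((hasDerivAt_Q1 hp x).const_mul c)
    · intro x
      have h := (hv2 x).sub ((hasDerivAt_Q2 hp x).const_mul c)
      convert (show HasDerivAt (F := ℝ) _ _ x from h) using 1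
      · rfl
      rw [hd2 x]
      ring
    · intro x
      rw [abs_le]
      constructor
      · have := V_le hp x; rw [← hC] at this; linarith
      · have := V_nonneg hp x; linarith
    · simp [hv0, Q1_zero hp]
    · show deriv v 0 - c * Q2 p 0 = 0
      rw [hc, div_mul_cancel₀ _ (Q2_zero_ne hp)]
      ring
  have hthis : v x - c * Q1 p x = 0 := hwzero x
  have hQd : deriv (Q p) x = Q1 p x := (hasDerivAt_Q hp x).deriv
  rw [hQd]
  linarith [hthis]
end

section
/- Let K ≥ 2, α > 0 and κ > 0. Set γ_k = k·(K−k)/2 for k = 1, …, K−1. Then there exist unique real numbers τ₁, …, τ_K such that Σ_{k=1}^K τ_k = 0 and e^(−(τ_{k+1}−τ_k)) = (2α/κ)·γ_k for k = 1, …, K−1. Moreover, the functions ȳ_k(t) = (k − (K+1)/2)·log t + τ_k solve, for all t > 0: d/dt ȳ₁ = −(κ/(2α))·e^(−(ȳ₂−ȳ₁)); d/dt ȳ_k = (κ/(2α))·(e^(−(ȳ_k−ȳ_{k−1})) − e^(−(ȳ_{k+1}−ȳ_k))) for k = 2, …, K−1; and d/dt ȳ_K = (κ/(2α))·e^(−(ȳ_K−ȳ_{K−1})).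 -/
theorem soliton_centers_ODE_explicit_solution (K : ℕ) (hK : 2 ≤ K)
    (α κ : ℝ) (hα : 0 < α) (hκ : 0 < κ) :
    ∃ τ : Fin K → ℝ,
      ((∑ k, τ k = 0) ∧
        (∀ j : ℕ, ∀ h : j + 1 < K,
          Real.exp (-(τ ⟨j + 1, h⟩ - τ ⟨j, by omega⟩)) =
            (2 * α / κ) * (((j : ℝ) + 1) * ((K : ℝ) - ((j : ℝ) + 1)) / 2))) ∧
      (∀ τ' : Fin K → ℝ,
        ((∑ k, τ' k = 0) ∧
          (∀ j : ℕ, ∀ h : j + 1 < K,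
            Real.exp (-(τ' ⟨j + 1, h⟩ - τ' ⟨j, by omega⟩)) =
              (2 * α / κ) * (((j : ℝ) + 1) * ((K : ℝ) - ((j : ℝ) + 1)) / 2))) →
        τ' = τ) ∧
      (∀ ybar : ℕ → ℝ → ℝ,
        (∀ k : ℕ, ∀ h : k < K, ∀ t : ℝ,
          ybar k t = ((k : ℝ) + 1 - ((K : ℝ) + 1) / 2) * Real.log t + τ ⟨k, h⟩) →
        ∀ t : ℝ, 0 < t →
          HasDerivAt (ybar 0) (-(κ / (2 * α)) * Real.exp (-(ybar 1 t - ybar 0 t))) t ∧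
          (∀ k : ℕ, 0 < k → k + 1 < K →
            HasDerivAt (ybar k)
              ((κ / (2 * α)) * (Real.exp (-(ybar k t - ybar (k - 1) t)) -
                Real.exp (-(ybar (k + 1) t - ybar k t)))) t) ∧
          HasDerivAt (ybar (K - 1))
            ((κ / (2 * α)) * Real.exp (-(ybar (K - 1) t - ybar (K - 2) t))) t) := by
  have hKR : (2:ℝ) ≤ (K:ℝ) := by exact_mod_cast hK
  have hK0 : (0:ℝ) < (K:ℝ) := by linarith
  set s : ℕ → ℝ := fun j =>
    -Real.log (2 * α / κ * (((j:ℝ) + 1) * ((K:ℝ) - ((j:ℝ) + 1)) / 2)) with hs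
  set S : ℕ → ℝ := fun k => ∑ i ∈ Finset.range k, s i with hSdef
  set τ : Fin K → ℝ := fun k => S k - (∑ m ∈ Finset.range K, S m) / K with hτ
  have hγpos : ∀ j : ℕ, j + 1 < K →
      0 < 2 * α / κ * (((j:ℝ) + 1) * ((K:ℝ) - ((j:ℝ) + 1)) / 2) := by
    intro j h
    have hj : ((j:ℝ) + 1) < (K:ℝ) := by exact_mod_cast h
    have h1 : 0 < (j:ℝ) + 1 := by positivity
    have h2 : 0 < (K:ℝ) - ((j:ℝ) + 1) := by linarith
    positivity
  have hexp_s : ∀ j : ℕ, j + 1 < K →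
      Real.exp (-(s j)) =
        2 * α / κ * (((j:ℝ) + 1) * ((K:ℝ) - ((j:ℝ) + 1)) / 2) := by
    intro j h
    simp only [hs, neg_neg]
    exact Real.exp_log (hγpos j h)
  have hτdiff : ∀ j : ℕ, ∀ h : j + 1 < K,
      τ ⟨j + 1, h⟩ - τ ⟨j, by omega⟩ = s j := by
    intro j h
    simp only [hτ, hSdef, Finset.sum_range_succ]
    ring
  have hsum : ∑ k, τ k = 0 := by
    have h1 : ∑ k : Fin K, S (k : ℕ) = ∑ m ∈ Finset.range K, S m :=
      Fin.sum_univ_eq_sum_range _ K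
    simp only [hτ, Finset.sum_sub_distrib, Finset.sum_const, Finset.card_univ,
      Fintype.card_fin, nsmul_eq_mul, h1]
    field_simp
    ring
  refine ⟨τ, ⟨hsum, ?_⟩, ?_, ?_⟩
  · intro j h
    rw [hτdiff j h]
    exact hexp_s j h
  · -- uniqueness
    rintro τ' ⟨hsum', hexp'⟩
    have hdiff' : ∀ j : ℕ, ∀ h : j + 1 < K,
        τ' ⟨j + 1, h⟩ - τ' ⟨j, by omega⟩ = s j := by
      intro j h
      have h1 := (hexp' j h).trans (hexp_s j h).symm
      have h2 := Real.exp_injective h1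
      linarith
    have h0K : 0 < K := by omega
    have hkey : ∀ k : ℕ, ∀ h : k < K,
        τ' ⟨k, h⟩ = τ ⟨k, h⟩ + (τ' ⟨0, h0K⟩ - τ ⟨0, h0K⟩) := by
      intro k
      induction k with
      | zero => intro h; ring
      | succ n ih =>
        intro h
        have hn : n < K := by omega
        have h1 := hdiff' n h
        have h2 := hτdiff n h
        have h3 := ih hn
        linarith
    have hsum'' : ∑ i, τ' i = ∑ i, τ i + (K:ℝ) * (τ' ⟨0, h0K⟩ - τ ⟨0, h0K⟩) := by
      rw [Finset.sum_congr rfl (fun i _ => hkey i.1 i.2), Finset.sum_add_distrib]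
      simp [mul_comm]
      ring
    rw [hsum, hsum'] at hsum''
    have hKd : (K:ℝ) * (τ' ⟨0, h0K⟩ - τ ⟨0, h0K⟩) = 0 := by linarith
    have hd0 : τ' ⟨0, h0K⟩ - τ ⟨0, h0K⟩ = 0 := by
      rcases mul_eq_zero.mp hKd with h | h
      · exact absurd h (ne_of_gt hK0)
      · exact h
    funext k
    rw [hkey k k.isLt, hd0, add_zero]
  · -- ODE
    intro ybar hy t ht
    have hder : ∀ k : ℕ, ∀ h : k < K,
        HasDerivAt (ybar k) (((k:ℝ) + 1 - ((K:ℝ) + 1) / 2) * t⁻¹) t := by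
      intro k h
      have hfun : ybar k = fun u => ((k:ℝ) + 1 - ((K:ℝ) + 1) / 2) * Real.log u + τ ⟨k, h⟩ :=
        funext (hy k h)
      rw [hfun]
      exact (HasDerivAt.const_mul _ (Real.hasDerivAt_log ht.ne')).add_const _
    have hstep : ∀ j : ℕ, ∀ h : j + 1 < K,
        Real.exp (-(ybar (j + 1) t - ybar j t)) =
          t⁻¹ * (2 * α / κ * (((j:ℝ) + 1) * ((K:ℝ) - ((j:ℝ) + 1)) / 2)) := by
      intro j h
      have hd := hτdiff j h
      have heq : τ ⟨j + 1, h⟩ = s j + τ ⟨j, by omega⟩ := by linarith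
      have harg : ybar (j + 1) t - ybar j t = Real.log t + s j := by
        rw [hy (j + 1) h t, hy j (by omega) t, heq]
        push_cast
        ring
      rw [harg, neg_add, Real.exp_add, Real.exp_neg, Real.exp_log ht, hexp_s j h]
    refine ⟨?_, ?_, ?_⟩
    · have h0 := hstep 0 (by omega)
      simp only [Nat.zero_add] at h0
      have hval : -(κ / (2 * α)) * Real.exp (-(ybar 1 t - ybar 0 t)) =
          (((0:ℕ):ℝ) + 1 - ((K:ℝ) + 1) / 2) * t⁻¹ := by
        rw [h0]
        field_simp [hα.ne', hκ.ne', ht.ne']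
        ring
      rw [hval]
      exact hder 0 (by omega)
    · intro k hk0 hkK
      have hk1 : k - 1 + 1 = k := by omega
      have hA := hstep (k - 1) (by omega)
      rw [hk1] at hA
      have hB := hstep k hkK
      have hcast : ((k - 1 : ℕ) : ℝ) = (k:ℝ) - 1 := by
        rw [Nat.cast_sub (by omega : 1 ≤ k)]; norm_num
      rw [hcast] at hA
      have hval : (κ / (2 * α)) * (Real.exp (-(ybar k t - ybar (k - 1) t)) -
          Real.exp (-(ybar (k + 1) t - ybar k t))) =
          ((k:ℝ) + 1 - ((K:ℝ) + 1) / 2) * t⁻¹ := by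
        rw [hA, hB]
        field_simp [hα.ne', hκ.ne', ht.ne']
        ring
      rw [hval]
      exact hder k (by omega)
    · have h2 : K - 2 + 1 = K - 1 := by omega
      have hA := hstep (K - 2) (by omega)
      rw [h2] at hA
      have hc2 : ((K - 2 : ℕ) : ℝ) = (K:ℝ) - 2 := by
        rw [Nat.cast_sub hK]; norm_num
      have hc1 : ((K - 1 : ℕ) : ℝ) = (K:ℝ) - 1 := by
        rw [Nat.cast_sub (by omega : 1 ≤ K)]; norm_num
      rw [hc2] at hA
      have hval : (κ / (2 * α)) * Real.exp (-(ybar (K - 1) t - ybar (K - 2) t)) =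
          (((K - 1 : ℕ):ℝ) + 1 - ((K:ℝ) + 1) / 2) * t⁻¹ := by
        rw [hA, hc1]
        field_simp [hα.ne', hκ.ne', ht.ne']
        ring
      rw [hval]
      exact hder (K - 1) (by omega)
end
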